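/- Let X be a compact plane set and let x ∈ X. Suppose there is an open neighbourhood U of x in X such that every point of U \ {x} is an R-point for R(X). Then x is a point of continuity for R(X). -/

import Mathlib

open Metric MeasureTheory Set

noncomputable section

/-- Membership in the uniform algebra `R(X)`: `f` is continuous on `X` and is a uniform
limit on `X` of rational functions with no poles on `X`. -/
def RMem (X : Set ℂ) (f : ℂ → ℂ) : Prop :=
  ContinuousOn f X ∧ ∀ ε : ℝ, 0 < ε → ∃ p q : Polynomial ℂ,
    (∀ z ∈ X, q.eval z ≠ 0) ∧ ∀ z ∈ X, ‖f z - p.eval z / q.eval z‖ < ε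

/-- The ideal `M_x` of functions in `R(X)` vanishing at `x`. -/
def Mideal (X : Set ℂ) (x : ℂ) : Set (ℂ → ℂ) := {f | RMem X f ∧ f x = 0}

/-- The ideal `J_x` of functions in `R(X)` vanishing on a neighbourhood of `x` in `X`. -/
def Jideal (X : Set ℂ) (x : ℂ) : Set (ℂ → ℂ) :=
  {f | RMem X f ∧ ∃ U : Set ℂ, IsOpen U ∧ x ∈ U ∧ ∀ z ∈ X ∩ U, f z = 0}

/-- `x` is a point of continuity for `R(X)`: for every `y ∈ X \ {x}`, `J_y ⊄ M_x`. -/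
def PointOfContinuity (X : Set ℂ) (x : ℂ) : Prop :=
  ∀ y ∈ X, y ≠ x → ¬ (Jideal X y ⊆ Mideal X x)

/-- `x` is an R-point for `R(X)`: for every `y ∈ X \ {x}`, `J_x ⊄ M_y`. -/
def RPoint (X : Set ℂ) (x : ℂ) : Prop :=
  ∀ y ∈ X, y ≠ x → ¬ (Jideal X x ⊆ Mideal X y)

section RAux

open Polynomial Filter Topology

/-- Rational functions with no poles on `X` belong to `R(X)`. -/
lemma rmem_rat (X : Set ℂ) (p q : Polynomial ℂ) (hq : ∀ z ∈ X, q.eval z ≠ 0) :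
    RMem X (fun z => p.eval z / q.eval z) := by
  refine ⟨ContinuousOn.div p.continuous.continuousOn q.continuous.continuousOn hq,
    fun ε hε => ⟨p, q, hq, fun z hz => by simpa using hε⟩⟩

lemma rmem_const (X : Set ℂ) (c : ℂ) : RMem X (fun _ => c) := by
  have h := rmem_rat X (Polynomial.C c) 1 (by simp)
  simpa using h

lemma exists_abs_bound {X : Set ℂ} (hX : IsCompact X) {f : ℂ → ℂ} (hf : ContinuousOn f X) :
    ∃ C : ℝ, 0 ≤ C ∧ ∀ z ∈ X, ‖f z‖ ≤ C := by
  obtain ⟨C, hC⟩ := hX.exists_bound_of_continuousOn hf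
  refine ⟨max C 0, le_max_right _ _, fun z hz => ?_⟩
  have := hC z hz
  exact this.trans (le_max_left _ _)

/-- `R(X)` is closed under products. -/
lemma RMem.mul {X : Set ℂ} (hXc : IsCompact X) {f g : ℂ → ℂ}
    (hf : RMem X f) (hg : RMem X g) : RMem X (fun z => f z * g z) := by
  obtain ⟨Cf, hCf0, hCf⟩ := exists_abs_bound hXc hf.1
  obtain ⟨Cg, hCg0, hCg⟩ := exists_abs_bound hXc hg.1
  refine ⟨hf.1.mul hg.1, fun ε hε => ?_⟩
  have hd2 : (0:ℝ) < Cf + Cg + 2 := by linarith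
  set δ : ℝ := min 1 (ε / (Cf + Cg + 2)) with hδdef
  have hδpos : 0 < δ := lt_min one_pos (div_pos hε hd2)
  have hδ1 : δ ≤ 1 := min_le_left _ _
  have hδ2 : δ ≤ ε / (Cf + Cg + 2) := min_le_right _ _
  obtain ⟨p1, q1, hq1, h1⟩ := hf.2 δ hδpos
  obtain ⟨p2, q2, hq2, h2⟩ := hg.2 δ hδpos
  refine ⟨p1 * p2, q1 * q2, fun z hz => by
    simp only [Polynomial.eval_mul]
    exact mul_ne_zero (hq1 z hz) (hq2 z hz), fun z hz => ?_⟩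
  have hr : (p1*p2).eval z / (q1*q2).eval z =
      (p1.eval z / q1.eval z) * (p2.eval z / q2.eval z) := by
    simp only [Polynomial.eval_mul]
    rw [div_mul_div_comm]
  rw [hr]
  set r1 := p1.eval z / q1.eval z with hr1
  set r2 := p2.eval z / q2.eval z with hr2
  have e1 : ‖f z - r1‖ ≤ δ := le_of_lt (h1 z hz)
  have e2 : ‖g z - r2‖ ≤ δ := le_of_lt (h2 z hz)
  have hr2b : ‖r2‖ ≤ Cg + δ := by
    have h3 : r2 = g z - (g z - r2) := by ring
    calc ‖r2‖ = ‖g z - (g z - r2)‖ := by rw [← h3]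
      _ ≤ ‖g z‖ + ‖g z - r2‖ := norm_sub_le _ _
      _ ≤ Cg + δ := add_le_add (hCg z hz) e2
  have key : f z * g z - r1 * r2 = f z * (g z - r2) + (f z - r1) * r2 := by ring
  calc ‖f z * g z - r1 * r2‖
      = ‖f z * (g z - r2) + (f z - r1) * r2‖ := by rw [key]
    _ ≤ ‖f z * (g z - r2)‖ + ‖(f z - r1) * r2‖ :=
        norm_add_le _ _
    _ = ‖f z‖ * ‖g z - r2‖
        + ‖f z - r1‖ * ‖r2‖ := by rw [norm_mul, norm_mul]
    _ ≤ Cf * δ + δ * (Cg + δ) := by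
        refine add_le_add (mul_le_mul (hCf z hz) e2 (norm_nonneg _) hCf0) ?_
        exact mul_le_mul e1 hr2b (norm_nonneg _) (le_of_lt hδpos)
    _ ≤ Cf * δ + δ * (Cg + 1) := by nlinarith
    _ = (Cf + Cg + 1) * δ := by ring
    _ < (Cf + Cg + 2) * δ := by nlinarith
    _ ≤ ε := by
        rw [← le_div_iff₀' hd2]
        exact hδ2

/-- `R(X)` is closed under finite products. -/
lemma rmem_prod {X : Set ℂ} (hXc : IsCompact X) {ι : Type*} (f : ι → ℂ → ℂ) :
    ∀ (t : Finset ι), (∀ i ∈ t, RMem X (f i)) → RMem X (fun z => ∏ i ∈ t, f i z) := by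
  classical
  intro t
  induction t using Finset.induction_on with
  | empty => intro _; simpa using rmem_const X 1
  | @insert a s ha ih =>
    intro hmem
    have h1 := hmem a (Finset.mem_insert_self a s)
    have h2 := ih (fun i hi => hmem i (Finset.mem_insert_of_mem hi))
    have := RMem.mul hXc h1 h2
    have hfun : (fun z => f a z * ∏ i ∈ s, f i z) = fun z => ∏ i ∈ insert a s, f i z := by
      funext z
      rw [Finset.prod_insert ha]
    rwa [hfun] at this

/-- If `f ∈ R(X)` vanishes on `X ∩ V` with `V` open meeting an open ball contained in `X`,
then `f` vanishes at the center of the ball (identity theorem). -/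
lemma rmem_zero_of_ball {X : Set ℂ} {f : ℂ → ℂ} (hf : RMem X f) {c : ℂ} {τ : ℝ}
    (hτ : 0 < τ) (hball : ball c τ ⊆ X) {V : Set ℂ} (hV : IsOpen V) {z : ℂ}
    (hzV : z ∈ V) (hzb : z ∈ ball c τ) (hvan : ∀ w ∈ X ∩ V, f w = 0) : f c = 0 := by
  have hsel : ∀ k : ℕ, ∃ pq : Polynomial ℂ × Polynomial ℂ,
      (∀ w ∈ X, pq.2.eval w ≠ 0) ∧
      ∀ w ∈ X, ‖f w - pq.1.eval w / pq.2.eval w‖ < 1/(k+1) := by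
    intro k
    obtain ⟨p, q, h1, h2⟩ := hf.2 (1/(k+1)) (by positivity)
    exact ⟨⟨p, q⟩, h1, h2⟩
  choose pq hq1 hq2 using hsel
  set φ : ℕ → ℂ → ℂ := fun k w => (pq k).1.eval w / (pq k).2.eval w with hφ
  have hdiff : ∀ k, DifferentiableOn ℂ (φ k) (ball c τ) := fun k =>
    DifferentiableOn.div ((pq k).1.differentiable.differentiableOn)
      ((pq k).2.differentiable.differentiableOn) (fun w hw => hq1 k w (hball hw))
  have huc : TendstoUniformlyOn φ f atTop (ball c τ) := by
    rw [Metric.tendstoUniformlyOn_iff]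
    intro ε hε
    obtain ⟨N, hN⟩ := exists_nat_one_div_lt hε
    filter_upwards [Filter.eventually_ge_atTop N] with k hk w hw
    rw [dist_eq_norm]
    calc ‖f w - φ k w‖ < 1/(k+1) := hq2 k w (hball hw)
      _ ≤ 1/(N+1) := by
          apply one_div_le_one_div_of_le (by positivity)
          exact_mod_cast Nat.add_le_add_right hk 1
      _ < ε := hN
  have hDf : DifferentiableOn ℂ f (ball c τ) :=
    (huc.tendstoLocallyUniformlyOn).differentiableOn
      (Filter.Eventually.of_forall hdiff) isOpen_ball
  have hA : AnalyticOnNhd ℂ f (ball c τ) := hDf.analyticOnNhd isOpen_ball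
  have hev : f =ᶠ[nhds z] 0 := by
    filter_upwards [Filter.inter_mem (hV.mem_nhds hzV) (isOpen_ball.mem_nhds hzb)] with w hw
    exact hvan w ⟨hball hw.2, hw.1⟩
  have := hA.eqOn_zero_of_preconnected_of_eventuallyEq_zero
    (convex_ball c τ).isPreconnected hzb hev
  exact this (mem_ball_self hτ)

/-- A nonempty open set in `ℂ` is not covered by finitely many closed sets
with empty interior. -/
lemma not_cover_by_nwd {ι : Type*} (C : ι → Set ℂ) :
    ∀ (s : Finset ι), (∀ i ∈ s, IsClosed (C i)) → (∀ i ∈ s, interior (C i) = ∅) →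
    ∀ O : Set ℂ, IsOpen O → O.Nonempty → ¬ (O ⊆ ⋃ i ∈ s, C i) := by
  classical
  intro s
  induction s using Finset.induction_on with
  | empty =>
    rintro _ _ O _ ⟨w, hw⟩ hsub
    simpa using hsub hw
  | @insert a s ha ih =>
    intro hcl hint O hO hne hsub
    by_cases hOa : (O ∩ (C a)ᶜ).Nonempty
    · refine ih (fun i hi => hcl i (Finset.mem_insert_of_mem hi))
        (fun i hi => hint i (Finset.mem_insert_of_mem hi)) (O ∩ (C a)ᶜ)
        (hO.inter (hcl a (Finset.mem_insert_self _ _)).isOpen_compl) hOa ?_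
      intro w hw
      have h2 := hsub hw.1
      rw [Set.mem_iUnion₂] at h2
      obtain ⟨i, hi, hwC⟩ := h2
      rcases Finset.mem_insert.mp hi with rfl | his
      · exact absurd hwC hw.2
      · exact Set.mem_iUnion₂.mpr ⟨i, his, hwC⟩
    · have hOsub : O ⊆ C a := by
        intro w hw
        by_contra hn
        exact hOa ⟨w, hw, hn⟩
      have h3 : O ⊆ interior (C a) := hO.subset_interior_iff.mpr hOsub
      rw [hint a (Finset.mem_insert_self _ _)] at h3
      exact hne.elim fun w hw => (h3 hw).elim

end RAux

set_option maxHeartbeats 2000000 in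
/-- (The positive answer to Question 5.1 of the paper for `R(X)`.)  If there is an open
neighbourhood `U` of `x` in `X` such that every point of `U \ {x}` is an R-point for
`R(X)`, then `x` is a point of continuity for `R(X)`. -/
theorem rpoints_near_give_point_of_continuity (X : Set ℂ) (hXc : IsCompact X)
    (hXne : X.Nonempty) (x : ℂ) (hx : x ∈ X)
    (U : Set ℂ) (hU : IsOpen U) (hxU : x ∈ U)
    (h : ∀ y ∈ X ∩ U, y ≠ x → RPoint X y) :
    PointOfContinuity X x := by
  classical
  intro y hyX hyx
  by_cases hyU : y ∈ U
  · exact h y ⟨hyX, hyU⟩ hyx x hx (Ne.symm hyx)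
  · -- Hard case: `y ∉ U`.
    -- Choose a radius `r` with `closedBall x r ⊆ U`.
    obtain ⟨r0, hr0pos, hr0⟩ := Metric.isOpen_iff.mp hU x hxU
    set r : ℝ := r0/2 with hrdef
    have hrpos : 0 < r := by positivity
    have hcb : closedBall x r ⊆ U :=
      subset_trans (closedBall_subset_ball (by rw [hrdef]; linarith)) hr0
    have hyfar : r < dist y x := by
      by_contra hle
      push_neg at hle
      exact hyU (hcb (mem_closedBall.mpr hle))
    -- No open ball inside `X` can lie in `U \ {x}`:  identity theorem plus R-points.
    have hnoball : ∀ (c : ℂ) (τ : ℝ), 0 < τ → ball c τ ⊆ X → ball c τ ⊆ U →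
        x ∉ ball c τ → False := by
      intro c τ hτ hbX hbU hxb
      set z : ℂ := c + (τ/2 : ℝ) with hzdef
      have hzb : z ∈ ball c τ := by
        rw [mem_ball, hzdef]
        have h1 : c + ((τ/2 : ℝ) : ℂ) - c = ((τ/2 : ℝ) : ℂ) := by ring
        rw [Complex.dist_eq, h1, Complex.norm_real, Real.norm_eq_abs, abs_of_pos (by linarith)]
        linarith
      have hzX : z ∈ X := hbX hzb
      have hzU : z ∈ U := hbU hzb
      have hzx : z ≠ x := fun hh => hxb (hh ▸ hzb)
      have hcz : c ≠ z := by
        rw [hzdef]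
        intro hh
        have h2 : ((τ/2 : ℝ) : ℂ) = 0 := (left_eq_add.mp hh).symm ▸ rfl
        rw [Complex.ofReal_eq_zero] at h2
        linarith
      have hR := h z ⟨hzX, hzU⟩ hzx c (hbX (mem_ball_self hτ)) hcz
      rw [Set.not_subset] at hR
      obtain ⟨g, hgJ, hgM⟩ := hR
      obtain ⟨hgR, V, hVopen, hzV, hvan⟩ := hgJ
      have hgc : g c ≠ 0 := fun h0 => hgM ⟨hgR, h0⟩
      exact hgc (rmem_zero_of_ball hgR hτ hbX hVopen hzV hzb hvan)
    -- The compact shell of R-points.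
    set Kset : Set ℂ := X ∩ {ζ : ℂ | dist ζ x ∈ Icc (r/2) r} with hKdef
    have hKc : IsCompact Kset :=
      hXc.inter_right (isClosed_Icc.preimage (Continuous.dist continuous_id continuous_const))
    have hKdata : ∀ z : ℂ, z ∈ Kset → ∃ gV : (ℂ → ℂ) × Set ℂ,
        RMem X gV.1 ∧ IsOpen gV.2 ∧ z ∈ gV.2 ∧ (∀ w ∈ X ∩ gV.2, gV.1 w = 0) ∧
        gV.1 x ≠ 0 := by
      intro z hz
      have hzX : z ∈ X := hz.1
      have hzd : dist z x ∈ Icc (r/2) r := hz.2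
      have hzU : z ∈ U := hcb (mem_closedBall.mpr hzd.2)
      have hzx : z ≠ x := by
        intro hh
        rw [hh] at hzd
        simp only [dist_self, mem_Icc] at hzd
        linarith [hzd.1]
      have hR := h z ⟨hzX, hzU⟩ hzx x hx (fun hh => hzx hh.symm)
      rw [Set.not_subset] at hR
      obtain ⟨g, hgJ, hgM⟩ := hR
      obtain ⟨hgR, V, hVopen, hzV, hvan⟩ := hgJ
      exact ⟨⟨g, V⟩, hgR, hVopen, hzV, hvan, fun h0 => hgM ⟨hgR, h0⟩⟩
    choose gV hgR hgVO hgzV hgvan hgix using hKdata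
    have hcover : Kset ⊆ ⋃ z : Kset, (gV z z.2).2 :=
      fun z hz => Set.mem_iUnion.mpr ⟨⟨z, hz⟩, hgzV z hz⟩
    obtain ⟨t, ht⟩ := hKc.elim_finite_subcover (fun z : Kset => (gV z z.2).2)
      (fun z => hgVO z z.2) hcover
    set F : ℂ → ℂ := fun ζ => ∏ i ∈ t, (gV i i.2).1 ζ with hFdef
    have hFrm : RMem X F := rmem_prod hXc _ t (fun i _ => hgR i i.2)
    have hFx : F x ≠ 0 := Finset.prod_ne_zero_iff.mpr (fun i _ => hgix i i.2)
    set N : Set ℂ := ⋃ i ∈ t, (gV i i.2).2 with hNdef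
    have hNopen : IsOpen N := isOpen_biUnion (fun i _ => hgVO i i.2)
    have hF0 : ∀ w ∈ X ∩ N, F w = 0 := by
      rintro w ⟨hwX, hwN⟩
      rw [hNdef, Set.mem_iUnion₂] at hwN
      obtain ⟨i, hit, hwV⟩ := hwN
      exact Finset.prod_eq_zero hit (hgvan i i.2 w ⟨hwX, hwV⟩)
    have hKN : Kset ⊆ N := fun z hz => by
      have := ht hz
      rwa [hNdef]
    -- The cut-off function `g`.
    set s3 : ℝ := 3*r/4 with hs3
    set g : ℂ → ℂ := (ball x s3).indicator F with hgdef
    have hgball : ∀ w ∈ ball x s3, g w = F w := fun w hw => indicator_of_mem hw F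
    have hgout : ∀ w ∉ ball x s3, g w = 0 := fun w hw => indicator_of_notMem hw F
    have hgx : g x = F x := hgball x (mem_ball_self (by rw [hs3]; linarith))
    -- continuity of `g` on `X`
    have hgcont : ContinuousOn g X := by
      intro ζ hζ
      rcases lt_trichotomy (dist ζ x) s3 with hlt | heq | hgt
      · have hζb : ζ ∈ ball x s3 := mem_ball.mpr hlt
        have hev : g =ᶠ[nhdsWithin ζ X] F := by
          filter_upwards [mem_nhdsWithin_of_mem_nhds (isOpen_ball.mem_nhds hζb)] with w hw
          exact hgball w hw
        exact (hFrm.1 ζ hζ).congr_of_eventuallyEq hev (hgball ζ hζb)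
      · have hζK : ζ ∈ Kset := by
          refine ⟨hζ, ?_⟩
          rw [mem_setOf_eq, heq, hs3, mem_Icc]
          constructor <;> linarith
        have hζN : ζ ∈ N := hKN hζK
        have hzero : ∀ w ∈ X ∩ N, g w = 0 := by
          intro w hw
          by_cases hwb : w ∈ ball x s3
          · rw [hgball w hwb]; exact hF0 w hw
          · exact hgout w hwb
        have hev : g =ᶠ[nhdsWithin ζ X] (fun _ => 0) := by
          filter_upwards [mem_nhdsWithin_of_mem_nhds (hNopen.mem_nhds hζN),
            self_mem_nhdsWithin] with w hwN hwX
          exact hzero w ⟨hwX, hwN⟩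
        exact continuousWithinAt_const.congr_of_eventuallyEq hev (hzero ζ ⟨hζ, hζN⟩)
      · have hop : IsOpen (closedBall x s3)ᶜ := Metric.isClosed_closedBall.isOpen_compl
        have hζc : ζ ∈ (closedBall x s3)ᶜ := by
          simp only [mem_compl_iff, mem_closedBall, not_le]
          exact hgt
        have hev : g =ᶠ[nhdsWithin ζ X] (fun _ => 0) := by
          filter_upwards [mem_nhdsWithin_of_mem_nhds (hop.mem_nhds hζc)] with w hw
          exact hgout w (fun hwb => hw (ball_subset_closedBall hwb))
        refine continuousWithinAt_const.congr_of_eventuallyEq hev ?_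
        exact hgout ζ (fun hb => hζc (ball_subset_closedBall hb))
    -- good rational cut-offs: poles can be chosen off `X`
    have hgoodw : ∀ n : ℕ, 0 < n → ∃ w : ℂ, 5*r/8 < ‖w‖ ∧ ‖w‖ < 3*r/4 ∧
        ∀ ζ ∈ X, (ζ - x)^n + w^n ≠ 0 := by
      intro n hn
      by_contra hcon
      push_neg at hcon
      set S : Set ℂ := {ξ : ℂ | ξ^n = -1} with hSdef
      have hSfin : S.Finite := by
        have hsub : S ⊆ {ξ : ℂ | (Polynomial.X^n + Polynomial.C 1 : Polynomial ℂ).IsRoot ξ} := by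
          intro ξ hξ
          simp only [mem_setOf_eq, Polynomial.IsRoot, Polynomial.eval_add,
            Polynomial.eval_pow, Polynomial.eval_X, Polynomial.eval_C]
          rw [hSdef, mem_setOf_eq] at hξ
          rw [hξ]; ring
        exact (Polynomial.finite_setOf_isRoot (Polynomial.X_pow_add_C_ne_zero hn 1)).subset hsub
      set CC : ℂ → Set ℂ := fun ξ =>
        {w : ℂ | x + w*ξ ∈ X ∧ ‖w‖ ∈ Icc (5*r/8) (3*r/4)} with hCCdef
      have hCCcl : ∀ ξ, IsClosed (CC ξ) := by
        intro ξ
        have h1 : IsClosed {w : ℂ | x + w*ξ ∈ X} :=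
          IsClosed.preimage (continuous_const.add (continuous_id.mul continuous_const))
            hXc.isClosed
        have h2 : IsClosed {w : ℂ | ‖w‖ ∈ Icc (5*r/8) (3*r/4)} :=
          IsClosed.preimage continuous_norm isClosed_Icc
        exact h1.inter h2
      have hCCint : ∀ ξ ∈ S, interior (CC ξ) = ∅ := by
        intro ξ hξS
        have hξn : ξ^n = -1 := hξS
        have hξa : ‖ξ‖ = 1 := by
          have h1 : (‖ξ‖)^n = 1 := by
            rw [← norm_pow, hξn]
            simp
          have h0 : 0 ≤ ‖ξ‖ := norm_nonneg ξ
          rcases lt_trichotomy (‖ξ‖) 1 with hl | he | hg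
          · exfalso
            have := pow_lt_one₀ h0 hl (Nat.pos_iff_ne_zero.mp hn)
            rw [h1] at this; exact lt_irrefl 1 this
          · exact he
          · exfalso
            have := one_lt_pow₀ hg (Nat.pos_iff_ne_zero.mp hn)
            rw [h1] at this; exact lt_irrefl 1 this
        have hξ0 : ξ ≠ 0 := by
          intro hh
          rw [hh] at hξa
          simp at hξa
        rw [Set.eq_empty_iff_forall_notMem]
        intro w₀ hw₀
        obtain ⟨τ, hτ, hballτ⟩ := Metric.isOpen_iff.mp isOpen_interior w₀ hw₀
        have hball' : ball w₀ τ ⊆ CC ξ := hballτ.trans interior_subset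
        set c' : ℂ := x + w₀*ξ with hc'def
        have hmap : ∀ u ∈ ball c' τ, ((u - x)*ξ⁻¹) ∈ ball w₀ τ ∧ x + ((u-x)*ξ⁻¹)*ξ = u := by
          intro u hu
          have he : x + ((u-x)*ξ⁻¹)*ξ = u := by field_simp; ring
          refine ⟨?_, he⟩
          rw [mem_ball, Complex.dist_eq]
          have h2 : (u - x)*ξ⁻¹ - w₀ = (u - c') * ξ⁻¹ := by
            rw [hc'def]; field_simp; ring
          rw [h2, norm_mul, norm_inv, hξa, inv_one, mul_one]
          have h3 := mem_ball.mp hu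
          rwa [Complex.dist_eq] at h3
        exact hnoball c' τ hτ
          (fun u hu => by
            obtain ⟨hm, he⟩ := hmap u hu
            have h4 := (hball' hm).1
            rwa [he] at h4)
          (fun u hu => by
            obtain ⟨hm, he⟩ := hmap u hu
            have h2 := (hball' hm).2
            apply hcb
            rw [mem_closedBall, Complex.dist_eq]
            have h3 : ‖u - x‖ = ‖(u-x)*ξ⁻¹‖ := by
              rw [norm_mul, norm_inv, hξa]; simp
            rw [h3]
            exact le_trans h2.2 (by linarith))
          (fun hxball => by
            obtain ⟨hm, _⟩ := hmap x hxball
            have h2 := (hball' hm).2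
            simp only [sub_self, zero_mul, norm_zero, mem_Icc] at h2
            linarith [h2.1])
      have hA2sub : {w : ℂ | 5*r/8 < ‖w‖ ∧ ‖w‖ < 3*r/4} ⊆
          ⋃ ξ ∈ hSfin.toFinset, CC ξ := by
        intro w₁ hw₁
        obtain ⟨hwa, hwb⟩ := hw₁
        obtain ⟨ζ, hζX, hζe⟩ := hcon w₁ hwa hwb
        have hw10 : w₁ ≠ 0 := by
          intro hh
          rw [hh, norm_zero] at hwa
          linarith
        set ξ := (ζ - x)/w₁ with hξdef
        have hξS : ξ ∈ S := by
          have hw1n : w₁^n ≠ 0 := pow_ne_zero n hw10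
          have hnum : (ζ - x)^n = -w₁^n := by linear_combination hζe
          show ξ^n = -1
          rw [hξdef, div_pow, hnum]
          field_simp
        rw [Set.mem_iUnion₂]
        refine ⟨ξ, hSfin.mem_toFinset.mpr hξS, ?_, le_of_lt hwa, le_of_lt hwb⟩
        have hh : x + w₁*ξ = ζ := by
          rw [hξdef]
          field_simp
          ring
        show x + w₁*ξ ∈ X
        rw [hh]
        exact hζX
      refine not_cover_by_nwd CC hSfin.toFinset (fun ξ _ => hCCcl ξ)
        (fun ξ hξ => hCCint ξ (hSfin.mem_toFinset.mp hξ))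
        {w : ℂ | 5*r/8 < ‖w‖ ∧ ‖w‖ < 3*r/4} ?_ ?_ hA2sub
      · have hpre : {w : ℂ | 5*r/8 < ‖w‖ ∧ ‖w‖ < 3*r/4}
            = (fun w : ℂ => ‖w‖) ⁻¹' (Ioo (5*r/8) (3*r/4)) := rfl
        rw [hpre]
        exact isOpen_Ioo.preimage continuous_norm
      · refine ⟨((11*r/16 : ℝ) : ℂ), ?_⟩
        simp only [mem_setOf_eq, Complex.norm_real, Real.norm_eq_abs]
        rw [abs_of_pos (by linarith)]
        constructor <;> linarith
    -- `g ∈ R(X)`: uniform approximation by `R_n · F`.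
    obtain ⟨CF, hCF0, hCF⟩ := exists_abs_bound hXc hFrm.1
    have hgrm : RMem X g := by
      refine ⟨hgcont, ?_⟩
      intro ε hε
      have hCF1 : (0:ℝ) < CF + 1 := by linarith
      obtain ⟨n1, hn1⟩ := exists_pow_lt_of_lt_one
        (show (0:ℝ) < ε/(20*(CF+1)) by positivity) (show (4:ℝ)/5 < 1 by norm_num)
      obtain ⟨n2, hn2⟩ := exists_pow_lt_of_lt_one
        (show (0:ℝ) < ε/(16*(CF+1)) by positivity) (show (3:ℝ)/4 < 1 by norm_num)
      set n : ℕ := max 1 (max n1 n2) with hndef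
      have hnpos : 0 < n := lt_of_lt_of_le one_pos (le_max_left _ _)
      have hn1' : ((4:ℝ)/5)^n ≤ ((4:ℝ)/5)^n1 :=
        pow_le_pow_of_le_one (by norm_num) (by norm_num)
          (le_trans (le_max_left n1 n2) (le_max_right 1 _))
      have hn2' : ((3:ℝ)/4)^n ≤ ((3:ℝ)/4)^n2 :=
        pow_le_pow_of_le_one (by norm_num) (by norm_num)
          (le_trans (le_max_right n1 n2) (le_max_right 1 _))
      obtain ⟨w, hw1, hw2, hwne⟩ := hgoodw n hnpos
      set R : ℂ → ℂ := fun ζ => w^n / ((ζ - x)^n + w^n) with hRdef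
      have hRrm : RMem X R := by
        have heq : R = fun ζ => (Polynomial.C (w^n)).eval ζ /
            ((Polynomial.X - Polynomial.C x)^n + Polynomial.C (w^n)).eval ζ := by
          funext ζ
          simp [hRdef]
        rw [heq]
        refine rmem_rat X _ _ (fun ζ hζ => ?_)
        simpa using hwne ζ hζ
      have hfrm : RMem X (fun ζ => R ζ * F ζ) := RMem.mul hXc hRrm hFrm
      obtain ⟨p, q, hq, happ⟩ := hfrm.2 (ε/2) (by positivity)
      refine ⟨p, q, hq, fun z hz => ?_⟩
      have happ' : ‖R z * F z - p.eval z / q.eval z‖ < ε/2 := happ z hz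
      have hkey : ‖g z - R z * F z‖ < ε/2 := by
        have hd : dist z x = ‖z - x‖ := Complex.dist_eq z x
        by_cases h1 : dist z x < r/2
        · -- inner zone
          have hzball : z ∈ ball x s3 := by
            rw [mem_ball, hs3]; linarith
          rw [hgball z hzball]
          have hab : ‖z - x‖ ^ n ≤ (r/2)^n := by
            apply pow_le_pow_left₀ (norm_nonneg _)
            rw [← hd]; linarith
          have hwb : (5*r/8)^n ≤ ‖w‖ ^ n := by
            apply pow_le_pow_left₀ (by positivity)
            linarith
          have htri : ‖w‖ ^ n ≤
              ‖(z-x)^n + w^n‖ + ‖z - x‖ ^ n := by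
            calc ‖w‖ ^ n = ‖w^n‖ := (norm_pow _ _).symm
              _ = ‖((z-x)^n + w^n) - (z-x)^n‖ := by ring_nf
              _ ≤ ‖(z-x)^n + w^n‖ + ‖(z-x)^n‖ :=
                  norm_sub_le _ _
              _ = ‖(z-x)^n + w^n‖ + ‖z - x‖ ^ n := by rw [norm_pow]
          have hden : (5*r/8)^n - (r/2)^n ≤ ‖(z-x)^n + w^n‖ := by linarith
          have hdenpos : (0:ℝ) < (5*r/8)^n - (r/2)^n := by
            have := pow_lt_pow_left₀ (show r/2 < 5*r/8 by linarith) (by positivity)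
              (Nat.pos_iff_ne_zero.mp hnpos)
            linarith
          have hfac : F z - R z * F z = F z * ((z-x)^n / ((z-x)^n + w^n)) := by
            have hden0 : ((z-x)^n + w^n) ≠ 0 := hwne z hz
            rw [hRdef]
            field_simp
            ring
          have hstep : ‖F z - R z * F z‖ ≤
              CF * ((r/2)^n / ((5*r/8)^n - (r/2)^n)) := by
            rw [hfac, norm_mul, norm_div, norm_pow]
            apply mul_le_mul (hCF z hz) ?_ (by positivity) hCF0
            apply div_le_div₀ (by positivity) hab hdenpos hden
          have halg : (r/2)^n / ((5*r/8)^n - (r/2)^n) ≤ 5*((4:ℝ)/5)^n := by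
            rw [div_le_iff₀ hdenpos]
            have hkey2 : (r/2)^n = ((4:ℝ)/5)^n * (5*r/8)^n := by
              rw [← mul_pow]
              congr 1
              ring
            have hc1 : ((4:ℝ)/5)^n ≤ 4/5 := by
              calc ((4:ℝ)/5)^n ≤ ((4:ℝ)/5)^1 :=
                  pow_le_pow_of_le_one (by norm_num) (by norm_num) hnpos
                _ = 4/5 := pow_one _
            have hc0 : (0:ℝ) ≤ ((4:ℝ)/5)^n := by positivity
            have hB : (0:ℝ) < (5*r/8)^n := by positivity
            have hhint : (0:ℝ) ≤ (((4:ℝ)/5)^n * (5*r/8)^n) * (4 - 5*((4:ℝ)/5)^n) :=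
              mul_nonneg (mul_nonneg hc0 hB.le) (by linarith)
            rw [hkey2]
            nlinarith [hhint]
          calc ‖F z - R z * F z‖
              ≤ CF * ((r/2)^n / ((5*r/8)^n - (r/2)^n)) := hstep
            _ ≤ CF * (5*((4:ℝ)/5)^n) := mul_le_mul_of_nonneg_left halg hCF0
            _ ≤ (CF+1) * (5*((4:ℝ)/5)^n1) := by
                nlinarith [pow_nonneg (show (0:ℝ) ≤ 4/5 by norm_num) n,
                  pow_nonneg (show (0:ℝ) ≤ 4/5 by norm_num) n1]
            _ < (CF+1) * (5*(ε/(20*(CF+1)))) := by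
                apply mul_lt_mul_of_pos_left _ hCF1
                linarith
            _ = ε/4 := by
                have hne : CF + 1 ≠ 0 := ne_of_gt hCF1
                field_simp
                ring
            _ < ε/2 := by linarith
        · by_cases h2 : dist z x ≤ r
          · -- dead zone: everything vanishes
            have hzK : z ∈ Kset := ⟨hz, by
              rw [mem_setOf_eq, mem_Icc]
              exact ⟨le_of_not_gt h1, h2⟩⟩
            have hFz : F z = 0 := hF0 z ⟨hz, hKN hzK⟩
            have hgz : g z = 0 := by
              by_cases hb : z ∈ ball x s3
              · rw [hgball z hb, hFz]
              · exact hgout z hb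
            rw [hgz, hFz, mul_zero, sub_zero, norm_zero]
            linarith
          · -- outer zone
            push_neg at h2
            have hzout : z ∉ ball x s3 := by
              rw [mem_ball, hs3]
              push_neg
              linarith
            rw [hgout z hzout]
            have hab : (r:ℝ)^n ≤ ‖z - x‖ ^ n := by
              apply pow_le_pow_left₀ (by positivity)
              rw [← hd]; linarith
            have hwb : ‖w‖ ^ n ≤ (3*r/4)^n := by
              apply pow_le_pow_left₀ (norm_nonneg _)
              linarith
            have htri : ‖z-x‖ ^ n ≤
                ‖(z-x)^n + w^n‖ + ‖w‖ ^ n := by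
              calc ‖z-x‖ ^ n = ‖(z-x)^n‖ := (norm_pow _ _).symm
                _ = ‖((z-x)^n + w^n) - w^n‖ := by ring_nf
                _ ≤ ‖(z-x)^n + w^n‖ + ‖w^n‖ :=
                    norm_sub_le _ _
                _ = ‖(z-x)^n + w^n‖ + ‖w‖ ^ n := by rw [norm_pow]
            have hden : (r:ℝ)^n - (3*r/4)^n ≤ ‖(z-x)^n + w^n‖ := by linarith
            have hdenpos : (0:ℝ) < (r:ℝ)^n - (3*r/4)^n := by
              have := pow_lt_pow_left₀ (show 3*r/4 < r by linarith) (by positivity)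
                (Nat.pos_iff_ne_zero.mp hnpos)
              linarith
            have hstep : ‖(0:ℂ) - R z * F z‖ ≤
                ((3*r/4)^n / ((r:ℝ)^n - (3*r/4)^n)) * CF := by
              rw [zero_sub, norm_neg, norm_mul, hRdef]
              simp only
              rw [norm_div, norm_pow]
              apply mul_le_mul ?_ (hCF z hz) (norm_nonneg _) (div_nonneg (by positivity) hdenpos.le)
              apply div_le_div₀ (by positivity) hwb hdenpos hden
            have halg : (3*r/4)^n / ((r:ℝ)^n - (3*r/4)^n) ≤ 4*((3:ℝ)/4)^n := by
              rw [div_le_iff₀ hdenpos]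
              have hkey2 : (3*r/4)^n = ((3:ℝ)/4)^n * (r:ℝ)^n := by
                rw [← mul_pow]
                congr 1
                ring
              have hc1 : ((3:ℝ)/4)^n ≤ 3/4 := by
                calc ((3:ℝ)/4)^n ≤ ((3:ℝ)/4)^1 :=
                    pow_le_pow_of_le_one (by norm_num) (by norm_num) hnpos
                  _ = 3/4 := pow_one _
              have hc0 : (0:ℝ) ≤ ((3:ℝ)/4)^n := by positivity
              have hB : (0:ℝ) < (r:ℝ)^n := by positivity
              have hhint : (0:ℝ) ≤ (((3:ℝ)/4)^n * (r:ℝ)^n) * (3 - 4*((3:ℝ)/4)^n) :=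
                mul_nonneg (mul_nonneg hc0 hB.le) (by linarith)
              rw [hkey2]
              nlinarith [hhint]
            calc ‖(0:ℂ) - R z * F z‖
                ≤ ((3*r/4)^n / ((r:ℝ)^n - (3*r/4)^n)) * CF := hstep
              _ ≤ (4*((3:ℝ)/4)^n) * CF := mul_le_mul_of_nonneg_right halg hCF0
              _ ≤ (4*((3:ℝ)/4)^n2) * (CF+1) := by
                  nlinarith [pow_nonneg (show (0:ℝ) ≤ 3/4 by norm_num) n,
                    pow_nonneg (show (0:ℝ) ≤ 3/4 by norm_num) n2]
              _ < (4*(ε/(16*(CF+1)))) * (CF+1) := by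
                  apply mul_lt_mul_of_pos_right _ hCF1
                  linarith
              _ = ε/4 := by
                have hne : CF + 1 ≠ 0 := ne_of_gt hCF1
                field_simp
                ring
              _ < ε/2 := by linarith
      calc ‖g z - p.eval z / q.eval z‖
          ≤ ‖g z - R z * F z‖ + ‖R z * F z - p.eval z / q.eval z‖ :=
            norm_sub_le_norm_sub_add_norm_sub _ _ _
        _ < ε/2 + ε/2 := add_lt_add hkey happ'
        _ = ε := by ring
    -- conclusion: `g ∈ J_y` but `g x ≠ 0`.
    intro hsub
    have hgJ : g ∈ Jideal X y := by
      refine ⟨hgrm, (closedBall x s3)ᶜ, Metric.isClosed_closedBall.isOpen_compl, ?_, ?_⟩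
      · simp only [mem_compl_iff, mem_closedBall, not_le]
        rw [hs3]
        linarith
      · rintro ζ ⟨hζX, hζW⟩
        exact hgout ζ (fun hb => hζW (ball_subset_closedBall hb))
    have hgM := hsub hgJ
    exact hFx (by rw [← hgx]; exact hgM.2)

end
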